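/- For integers q, i, s, t with 0 ≤ s ≤ i-1 ≤ q-1 and 0 ≤ t ≤ q-1, one has Σ_{k=0}^{s} Σ_{l=0}^{t} C(i,k)·C(k,i-l-1)·C(q-i,s-k)·C(s-k,q-i-t+l) = C(q,s)·C(s,q-t-1). -/

import Mathlib

/-- The binomial coefficient `C(n,k)` extended to all integers, taken to be `0`
when `k < 0` or `k > n`. -/
def intChoose (n k : ℤ) : ℤ :=
  if 0 ≤ k ∧ k ≤ n then (n.toNat.choose k.toNat : ℤ) else 0

lemma intChoose_eq_zero {n k : ℤ} (h : k < 0 ∨ n < k) : intChoose n k = 0 := by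
  simp only [intChoose, ite_eq_right_iff]
  intro hc; omega

lemma intChoose_eq {n k : ℤ} (hn : 0 ≤ n) (hk : 0 ≤ k) :
    intChoose n k = (n.toNat.choose k.toNat : ℤ) := by
  by_cases h : k ≤ n
  · simp [intChoose, hk, h]
  · rw [intChoose_eq_zero (Or.inr (by omega)), Nat.choose_eq_zero_of_lt (by omega)]
    simp

lemma vand_base (a b n : ℤ) (ha : 0 ≤ a) (hb : 0 ≤ b) (hn : 0 ≤ n) :
    ∑ k ∈ Finset.Icc (0 : ℤ) n, intChoose a k * intChoose b (n - k)
      = intChoose (a + b) n := by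
  have himg : Finset.Icc (0 : ℤ) n = (Finset.range (n.toNat + 1)).image (fun k : ℕ => (k : ℤ)) := by
    ext m
    simp only [Finset.mem_Icc, Finset.mem_image, Finset.mem_range]
    constructor
    · intro h; exact ⟨m.toNat, by omega, by omega⟩
    · rintro ⟨l, hl, rfl⟩; omega
  rw [himg, Finset.sum_image (by intro x _ y _ h; simp only at h; omega)]
  rw [intChoose_eq (by omega) hn]
  have : ∀ k ∈ Finset.range (n.toNat + 1),
      intChoose a (k : ℤ) * intChoose b (n - k)
        = (a.toNat.choose k * b.toNat.choose (n.toNat - k) : ℤ) := by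
    intro k hk
    rw [Finset.mem_range] at hk
    rw [intChoose_eq ha (by positivity), intChoose_eq hb (by omega)]
    have h1 : (k : ℤ).toNat = k := by omega
    have h2 : (n - k).toNat = n.toNat - k := by omega
    rw [h1, h2]
  rw [Finset.sum_congr rfl this]
  have h3 : (a + b).toNat = a.toNat + b.toNat := by omega
  rw [h3, Nat.add_choose_eq, Finset.Nat.sum_antidiagonal_eq_sum_range_succ_mk]
  push_cast
  rfl

lemma vand_gen (a b n : ℤ) (ha : 0 ≤ a) (hb : 0 ≤ b) (S : Finset ℤ)
    (hS : ∀ k, 0 ≤ k → k ≤ a → 0 ≤ n - k → n - k ≤ b → k ∈ S) :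
    ∑ k ∈ S, intChoose a k * intChoose b (n - k) = intChoose (a + b) n := by
  have hzero : ∀ k : ℤ, (k < 0 ∨ a < k ∨ n - k < 0 ∨ b < n - k) →
      intChoose a k * intChoose b (n - k) = 0 := by
    intro k hk
    rcases hk with h | h | h | h
    · rw [intChoose_eq_zero (Or.inl h), zero_mul]
    · rw [intChoose_eq_zero (Or.inr h), zero_mul]
    · rw [intChoose_eq_zero (Or.inl h), mul_zero]
    · rw [intChoose_eq_zero (Or.inr h), mul_zero]
  by_cases hn : 0 ≤ n
  · set T : Finset ℤ := Finset.Icc (max 0 (n - b)) (min a n) with hT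
    have hTS : T ⊆ S := by
      intro k hk
      rw [hT, Finset.mem_Icc, max_le_iff, le_min_iff] at hk
      exact hS k (by omega) (by omega) (by omega) (by omega)
    have hTI : T ⊆ Finset.Icc (0 : ℤ) n := by
      intro k hk
      rw [hT, Finset.mem_Icc, max_le_iff, le_min_iff] at hk
      rw [Finset.mem_Icc]
      omega
    have e1 : ∑ k ∈ S, intChoose a k * intChoose b (n - k)
        = ∑ k ∈ T, intChoose a k * intChoose b (n - k) := by
      symm
      apply Finset.sum_subset hTS
      intro k _ hk
      rw [hT, Finset.mem_Icc, max_le_iff, le_min_iff] at hk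
      exact hzero k (by omega)
    have e2 : ∑ k ∈ Finset.Icc (0 : ℤ) n, intChoose a k * intChoose b (n - k)
        = ∑ k ∈ T, intChoose a k * intChoose b (n - k) := by
      symm
      apply Finset.sum_subset hTI
      intro k hk1 hk
      rw [Finset.mem_Icc] at hk1
      rw [hT, Finset.mem_Icc, max_le_iff, le_min_iff] at hk
      exact hzero k (by omega)
    rw [e1, ← e2, vand_base a b n ha hb hn]
  · rw [intChoose_eq_zero (Or.inl (by omega))]
    apply Finset.sum_eq_zero
    intro k _
    exact hzero k (by omega)

lemma aux_inner_sum (q i s t k : ℤ) (hk0 : 0 ≤ k) (hks : k ≤ s) (hsi : s ≤ i - 1)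
    (hkq : i + s - q ≤ k) (ht0 : 0 ≤ t) :
    ∑ l ∈ Finset.Icc (0 : ℤ) t, intChoose k (i - l - 1) * intChoose (s - k) (q - i - t + l)
      = intChoose s (q - t - 1) := by
  have himg : Finset.Icc (i - 1 - t) (i - 1) = (Finset.Icc (0 : ℤ) t).image (fun l => i - 1 - l) := by
    ext m
    simp only [Finset.mem_Icc, Finset.mem_image]
    constructor
    · intro h; exact ⟨i - 1 - m, by omega, by omega⟩
    · rintro ⟨l, hl, rfl⟩; omega
  have e1 : ∑ l ∈ Finset.Icc (0 : ℤ) t,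
        intChoose k (i - l - 1) * intChoose (s - k) (q - i - t + l)
      = ∑ m ∈ Finset.Icc (i - 1 - t) (i - 1),
        intChoose k m * intChoose (s - k) ((q - t - 1) - m) := by
    rw [himg, Finset.sum_image (by intro x _ y _ h; simp only at h; omega)]
    apply Finset.sum_congr rfl
    intro l _
    congr 1
    · congr 1; ring
    · congr 1; ring
  rw [e1]
  have := vand_gen k (s - k) (q - t - 1) hk0 (by omega)
    (Finset.Icc (i - 1 - t) (i - 1))
    (by intro m h1 h2 h3 h4; rw [Finset.mem_Icc]; omega)
  rw [this]
  congr 1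
  ring

/-- for integers `q, i, s, t` with `0 ≤ s ≤ i-1 ≤ q-1` and `0 ≤ t ≤ q-1`,
`∑_{k=0}^{s} ∑_{l=0}^{t} C(i,k)·C(k,i-l-1)·C(q-i,s-k)·C(s-k,q-i-t+l) = C(q,s)·C(s,q-t-1)`. -/
theorem stmt_11 (q i s t : ℤ) (hs0 : 0 ≤ s) (hsi : s ≤ i - 1) (hiq : i - 1 ≤ q - 1)
    (ht0 : 0 ≤ t) (htq : t ≤ q - 1) :
    ∑ k ∈ Finset.Icc (0 : ℤ) s, ∑ l ∈ Finset.Icc (0 : ℤ) t,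
        intChoose i k * intChoose k (i - l - 1) * intChoose (q - i) (s - k)
          * intChoose (s - k) (q - i - t + l)
      = intChoose q s * intChoose s (q - t - 1) := by
  have key : ∀ k ∈ Finset.Icc (0 : ℤ) s,
      ∑ l ∈ Finset.Icc (0 : ℤ) t,
          intChoose i k * intChoose k (i - l - 1) * intChoose (q - i) (s - k)
            * intChoose (s - k) (q - i - t + l)
        = intChoose i k * intChoose (q - i) (s - k) * intChoose s (q - t - 1) := by
    intro k hk
    rw [Finset.mem_Icc] at hk
    have factored : ∑ l ∈ Finset.Icc (0 : ℤ) t,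
        intChoose i k * intChoose k (i - l - 1) * intChoose (q - i) (s - k)
          * intChoose (s - k) (q - i - t + l)
        = intChoose i k * intChoose (q - i) (s - k)
          * ∑ l ∈ Finset.Icc (0 : ℤ) t,
              intChoose k (i - l - 1) * intChoose (s - k) (q - i - t + l) := by
      rw [Finset.mul_sum]
      apply Finset.sum_congr rfl
      intro l _
      ring
    rw [factored]
    by_cases hkq : i + s - q ≤ k
    · rw [aux_inner_sum q i s t k hk.1 hk.2 hsi hkq ht0]
    · rw [intChoose_eq_zero (n := q - i) (Or.inr (by omega))]
      ring
  rw [Finset.sum_congr rfl key]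
  have : ∑ k ∈ Finset.Icc (0 : ℤ) s,
      intChoose i k * intChoose (q - i) (s - k) * intChoose s (q - t - 1)
      = (∑ k ∈ Finset.Icc (0 : ℤ) s, intChoose i k * intChoose (q - i) (s - k))
        * intChoose s (q - t - 1) := by
    rw [Finset.sum_mul]
  rw [this, vand_gen i (q - i) s (by omega) (by omega) _
    (by intro m h1 h2 h3 h4; rw [Finset.mem_Icc]; omega)]
  congr 2
  ring
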